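/- (Lemma: iterated star condition) Let L be a distributive lattice, a_i < b_i elements of L for i ∈ [n], ê_I ∈ L^n the tuple with i-th component b_i if i ∈ I and a_i otherwise, and f defined on {ê_I : I ⊆ [n]}. Suppose f satisfies: f(ê_{I∪{k}}) ∧ a_k ≤ f(ê_I) ≤ f(ê_{I\{k}}) ∨ b_k for all I ⊆ [n] and k ∈ [n]. Then for all S ⊆ T ⊆ [n]: f(ê_T) ∧ ⋀_{k ∈ T\S} a_k ≤ f(ê_S) and f(ê_T) ≤ f(ê_S) ∨ ⋁_{k ∈ T\S} b_k. -/

import Mathlib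

/-- The generalized characteristic vector `ê_I ∈ L^n`: `i`-th component is `b i` if
`i ∈ I` and `a i` otherwise. -/
def eVec {n : ℕ} {L : Type*} (a b : Fin n → L) (I : Finset (Fin n)) : Fin n → L :=
  fun i => if i ∈ I then b i else a i

private lemma fold_inf_mono {α : Type*} {L : Type*} [DecidableEq α] [Lattice L]
    (D : Finset α) (g : α → L) {x y : L} (h : x ≤ y) :
    (D.fold (· ⊓ ·) x g : L) ≤ (D.fold (· ⊓ ·) y g : L) := by
  induction D using Finset.induction_on with
  | empty => simpa using h
  | insert _ _ hk ih => simp only [Finset.fold_insert hk]; exact inf_le_inf_left _ ih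

private lemma fold_sup_mono {α : Type*} {L : Type*} [DecidableEq α] [Lattice L]
    (D : Finset α) (g : α → L) {x y : L} (h : x ≤ y) :
    (D.fold (· ⊔ ·) x g : L) ≤ (D.fold (· ⊔ ·) y g : L) := by
  induction D using Finset.induction_on with
  | empty => simpa using h
  | insert _ _ hk ih => simp only [Finset.fold_insert hk]; exact sup_le_sup_left ih _

private lemma fold_inf_pull {α : Type*} {L : Type*} [DecidableEq α] [Lattice L]
    (D : Finset α) (g : α → L) (c x : L) :
    (c ⊓ (D.fold (· ⊓ ·) x g : L) : L) = (D.fold (· ⊓ ·) (c ⊓ x) g : L) := by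
  induction D using Finset.induction_on with
  | empty => simp
  | insert _ _ hk ih =>
    simp only [Finset.fold_insert hk, ← ih]
    rw [inf_left_comm]

private lemma fold_sup_pull {α : Type*} {L : Type*} [DecidableEq α] [Lattice L]
    (D : Finset α) (g : α → L) (c x : L) :
    (c ⊔ (D.fold (· ⊔ ·) x g : L) : L) = (D.fold (· ⊔ ·) (c ⊔ x) g : L) := by
  induction D using Finset.induction_on with
  | empty => simp
  | insert _ _ hk ih =>
    simp only [Finset.fold_insert hk, ← ih]
    rw [sup_left_comm]

/-- iterated star: if `f` satisfies (★) on the cuboid vertices, then for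
all `S ⊆ T`: `f(ê_T) ∧ ⋀_{k∈T\S} a_k ≤ f(ê_S)` and `f(ê_T) ≤ f(ê_S) ∨ ⋁_{k∈T\S} b_k`
(the possibly empty meets/joins are folded into `f(ê_T)` resp. `f(ê_S)`). -/
theorem stmt_6 {n : ℕ} {L : Type*} [DistribLattice L]
    (a b : Fin n → L) (hab : ∀ i, a i < b i)
    (f : (Fin n → L) → L)
    (hstar : ∀ (I : Finset (Fin n)) (k : Fin n),
      f (eVec a b (insert k I)) ⊓ a k ≤ f (eVec a b I) ∧
        f (eVec a b I) ≤ f (eVec a b (I.erase k)) ⊔ b k) :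
    ∀ S T : Finset (Fin n), S ⊆ T →
      ((T \ S).fold (· ⊓ ·) (f (eVec a b T)) a : L) ≤ f (eVec a b S) ∧
        f (eVec a b T) ≤ ((T \ S).fold (· ⊔ ·) (f (eVec a b S)) b : L) := by
  intro S T hST
  have key : ∀ m : ℕ, ∀ S T : Finset (Fin n), S ⊆ T → (T \ S).card = m →
      ((T \ S).fold (· ⊓ ·) (f (eVec a b T)) a : L) ≤ f (eVec a b S) ∧
        f (eVec a b T) ≤ ((T \ S).fold (· ⊔ ·) (f (eVec a b S)) b : L) := by
    intro m
    induction m with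
    | zero =>
      intro S T hST hcard
      have hD : T \ S = ∅ := Finset.card_eq_zero.mp hcard
      have : S = T := Finset.Subset.antisymm hST
        (fun x hx => by
          by_contra hxS
          exact absurd (Finset.mem_sdiff.mpr ⟨hx, hxS⟩) (by simp [hD]))
      subst this
      simp [hD]
    | succ m ih =>
      intro S T hST hcard
      obtain ⟨k, hk⟩ : ∃ k, k ∈ T \ S := Finset.card_pos.mp (by omega) |>.imp fun _ h => h
      obtain ⟨hkT, hkS⟩ := Finset.mem_sdiff.mp hk
      set T' := T.erase k with hT'
      have hST' : S ⊆ T' := fun x hx =>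
        Finset.mem_erase.mpr ⟨fun h => hkS (h ▸ hx), hST hx⟩
      have hDk : T' \ S = (T \ S).erase k := by
        ext x; simp [hT', Finset.mem_sdiff, Finset.mem_erase]; tauto
      have hcard' : (T' \ S).card = m := by
        rw [hDk, Finset.card_erase_of_mem hk]; omega
      obtain ⟨ih1, ih2⟩ := ih S T' hST' hcard'
      have hins : insert k (T' \ S) = T \ S := by
        rw [hDk, Finset.insert_erase hk]
      have hkD : k ∉ T' \ S := by rw [hDk]; exact Finset.notMem_erase k _
      have hTins : insert k T' = T := Finset.insert_erase hkT
      -- star facts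
      have star1 : f (eVec a b T) ⊓ a k ≤ f (eVec a b T') := by
        have := (hstar T' k).1; rwa [hTins] at this
      have star2 : f (eVec a b T) ≤ f (eVec a b T') ⊔ b k := by
        have := (hstar T k).2
        have herase : T.erase k = T' := rfl
        rwa [herase] at this
      constructor
      · rw [← hins, Finset.fold_insert hkD]
        calc (a k ⊓ ((T' \ S).fold (· ⊓ ·) (f (eVec a b T)) a : L) : L)
            = ((T' \ S).fold (· ⊓ ·) (a k ⊓ f (eVec a b T)) a : L) := fold_inf_pull _ _ _ _
          _ ≤ ((T' \ S).fold (· ⊓ ·) (f (eVec a b T')) a : L) :=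
              fold_inf_mono _ _ (by rw [inf_comm]; exact star1)
          _ ≤ f (eVec a b S) := ih1
      · rw [← hins, Finset.fold_insert hkD]
        calc f (eVec a b T) ≤ f (eVec a b T') ⊔ b k := star2
          _ ≤ ((T' \ S).fold (· ⊔ ·) (f (eVec a b S)) b : L) ⊔ b k := sup_le_sup_right ih2 _
          _ = b k ⊔ ((T' \ S).fold (· ⊔ ·) (f (eVec a b S)) b : L) := sup_comm _ _
  exact key _ S T hST rfl
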